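/- Let Γ be a simple graph on a vertex set V and let S ⊆ V. Then the canonical homomorphism from the right-angled Artin group of the induced subgraph, A_{Γ[S]}, to A_Γ, sending the generator corresponding to s ∈ S to of s, is injective; that is, special subgroups of a right-angled Artin group are right-angled Artin groups on the induced subgraphs. -/

import Mathlib

/-- The set of commutator relators of a right-angled Artin group. -/
def raagRels {V : Type*} (Γ : SimpleGraph V) : Set (FreeGroup V) :=
  {r | ∃ u v : V, Γ.Adj u v ∧
    r = FreeGroup.of u * FreeGroup.of v * (FreeGroup.of u)⁻¹ * (FreeGroup.of v)⁻¹}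

/-- The right-angled Artin group of the graph `Γ`. -/
abbrev RAAG {V : Type*} (Γ : SimpleGraph V) : Type _ :=
  PresentedGroup (raagRels Γ)

/-- The canonical generator of `RAAG Γ` corresponding to a vertex. -/
def RAAG.of {V : Type*} (Γ : SimpleGraph V) (v : V) : RAAG Γ :=
  PresentedGroup.of v

lemma raag_comm {V : Type*} (Γ : SimpleGraph V) {u v : V} (h : Γ.Adj u v) :
    RAAG.of Γ u * RAAG.of Γ v * (RAAG.of Γ u)⁻¹ * (RAAG.of Γ v)⁻¹ = 1 := by
  have hr : (FreeGroup.of u * FreeGroup.of v * (FreeGroup.of u)⁻¹ * (FreeGroup.of v)⁻¹ :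
      FreeGroup V) ∈ raagRels Γ := ⟨u, v, h, rfl⟩
  have : (QuotientGroup.mk (FreeGroup.of u * FreeGroup.of v * (FreeGroup.of u)⁻¹ *
      (FreeGroup.of v)⁻¹) : PresentedGroup (raagRels Γ)) = 1 :=
    (QuotientGroup.eq_one_iff _).2 (Subgroup.subset_normalClosure hr)
  simp only [RAAG.of, PresentedGroup.of, ← map_mul, ← map_inv]
  exact this

/-- Special subgroups of a right-angled Artin group: the canonical map from the
right-angled Artin group of an induced subgraph `Γ[S]` to `A_Γ`, sending
generators to generators, is injective. -/
theorem raag_induced_subgraph_embeds {V : Type*} (Γ : SimpleGraph V) (S : Set V) :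
    ∃ φ : RAAG (Γ.induce S) →* RAAG Γ,
      (∀ s : S, φ (RAAG.of (Γ.induce S) s) = RAAG.of Γ (s : V)) ∧
        Function.Injective φ := by
  classical
  -- forward map
  have hφ : ∀ r ∈ raagRels (Γ.induce S),
      FreeGroup.lift (fun s : S => RAAG.of Γ (s : V)) r = 1 := by
    rintro r ⟨u, v, huv, rfl⟩
    simp only [map_mul, map_inv, FreeGroup.lift_apply_of]
    exact raag_comm Γ huv
  set φ : RAAG (Γ.induce S) →* RAAG Γ := PresentedGroup.toGroup hφ with hφdef
  -- retraction
  have hπ : ∀ r ∈ raagRels Γ,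
      FreeGroup.lift (fun v : V => if h : v ∈ S then RAAG.of (Γ.induce S) ⟨v, h⟩ else 1) r = 1 := by
    rintro r ⟨u, v, huv, rfl⟩
    simp only [map_mul, map_inv, FreeGroup.lift_apply_of]
    by_cases hu : u ∈ S
    · by_cases hv : v ∈ S
      · simp only [dif_pos hu, dif_pos hv]
        exact raag_comm (Γ.induce S) (by simpa using huv)
      · simp [dif_pos hu, dif_neg hv]
    · simp [dif_neg hu]
  set π : RAAG Γ →* RAAG (Γ.induce S) := PresentedGroup.toGroup hπ with hπdef
  refine ⟨φ, fun s => PresentedGroup.toGroup.of hφ, ?_⟩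
  have hretr : ∀ x, π (φ x) = x := by
    intro x
    have : (π.comp φ) x = (MonoidHom.id _) x := by
      have key : ∀ s : S, (π.comp φ) (PresentedGroup.of s) = PresentedGroup.of s := by
        intro s
        show π (φ (PresentedGroup.of s)) = PresentedGroup.of s
        rw [hφdef, PresentedGroup.toGroup.of hφ,
          show (RAAG.of Γ (s : V)) = PresentedGroup.of (s : V) from rfl, hπdef,
          PresentedGroup.toGroup.of hπ]
        simp [RAAG.of]
      exact DFunLike.congr_fun (PresentedGroup.ext key) x
    simpa using this
  exact Function.LeftInverse.injective hretr
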